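/- Chain rule for B-derivatives along a curve: if x : ℝ → ℝⁿ is differentiable at t and B : ℝⁿ → ℝ is Lipschitz and B-differentiable (has one-sided directional derivatives in all directions) at x(t), then the left time derivative of B ∘ x at t satisfies ∂₋(B∘x)(t) = -B'(x(t); -ẋ(t)), where B'(y; q) is the one-sided directional derivative of B at y in direction q. -/

import Mathlib

open Filter Set in
theorem b_derivative_chain_rule {n : ℕ}
    (x : ℝ → EuclideanSpace ℝ (Fin n)) (t : ℝ) (v : EuclideanSpace ℝ (Fin n))
    (hx : HasDerivAt x v t)
    (B : EuclideanSpace ℝ (Fin n) → ℝ) (hB : LocallyLipschitz B)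
    (B' : EuclideanSpace ℝ (Fin n) → ℝ)
    (hB' : ∀ q : EuclideanSpace ℝ (Fin n),
      Tendsto (fun a : ℝ => (B (x t + a • q) - B (x t)) / a)
        (nhdsWithin 0 (Ioi 0)) (nhds (B' q))) :
    Tendsto (fun a : ℝ => (B (x t) - B (x a)) / (t - a))
      (nhdsWithin t (Iio t)) (nhds (-(B' (-v)))) := by
  obtain ⟨K, s, hs, hK⟩ := hB (x t)
  have hsub : Tendsto (fun h : ℝ => t - h) (nhdsWithin 0 (Ioi 0)) (nhds t) := by
    have : Tendsto (fun h : ℝ => t - h) (nhds (0:ℝ)) (nhds t) := by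
      simpa using (tendsto_const_nhds (x := t) (f := nhds (0:ℝ))).sub tendsto_id
    exact this.mono_left nhdsWithin_le_nhds
  have h1 : Tendsto (fun h : ℝ => x (t - h)) (nhdsWithin 0 (Ioi 0)) (nhds (x t)) :=
    hx.continuousAt.tendsto.comp hsub
  have h2 : Tendsto (fun h : ℝ => x t + h • (-v)) (nhdsWithin 0 (Ioi 0)) (nhds (x t)) := by
    have : Tendsto (fun h : ℝ => x t + h • (-v)) (nhds (0:ℝ)) (nhds (x t)) := by
      have hsm : Tendsto (fun h : ℝ => h • (-v)) (nhds (0:ℝ)) (nhds ((0:ℝ) • (-v))) :=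
        tendsto_id.smul_const (-v)
      simpa using (tendsto_const_nhds (x := x t) (f := nhds (0:ℝ))).add hsm
    exact this.mono_left nhdsWithin_le_nhds
  -- little-o estimate
  have ho0 : (fun a => x a - x t - (a - t) • v) =o[nhds t] fun a => a - t :=
    hasDerivAt_iff_isLittleO.mp hx
  have ho : (fun h : ℝ => x (t - h) - x t + h • v) =o[nhdsWithin 0 (Ioi 0)]
      (fun h : ℝ => h) := by
    have h' := (ho0.comp_tendsto hsub).neg_right
    simp only [Function.comp_def, sub_sub_cancel_left, neg_smul, sub_neg_eq_add,
      neg_neg] at h'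
    exact h'
  have hr : Tendsto (fun h : ℝ => ‖x (t - h) - x t + h • v‖ / h)
      (nhdsWithin 0 (Ioi 0)) (nhds 0) := by
    have := ho.norm_norm.tendsto_div_nhds_zero
    refine this.congr' ?_
    filter_upwards [self_mem_nhdsWithin] with h (hh : h ∈ Ioi (0:ℝ))
    rw [Real.norm_eq_abs, abs_of_pos hh]
  -- the correction term tends to 0
  have hcorr : Tendsto (fun h : ℝ => (B (x (t - h)) - B (x t + h • (-v))) / h)
      (nhdsWithin 0 (Ioi 0)) (nhds 0) := by
    have hbound : ∀ᶠ h in nhdsWithin (0:ℝ) (Ioi 0),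
        ‖(B (x (t - h)) - B (x t + h • (-v))) / h‖ ≤
          (K : ℝ) * (‖x (t - h) - x t + h • v‖ / h) := by
      filter_upwards [h1.eventually_mem hs, h2.eventually_mem hs,
        self_mem_nhdsWithin] with h hm1 hm2 (hh : h ∈ Ioi (0:ℝ))
      have hd := hK.dist_le_mul _ hm1 _ hm2
      rw [Real.norm_eq_abs, abs_div, abs_of_pos (mem_Ioi.mp hh), ← mul_div_assoc]
      refine div_le_div_of_nonneg_right ?_ (mem_Ioi.mp hh).le
      calc |B (x (t - h)) - B (x t + h • (-v))|
          = dist (B (x (t - h))) (B (x t + h • (-v))) := (Real.dist_eq _ _).symm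
        _ ≤ (K : ℝ) * dist (x (t - h)) (x t + h • (-v)) := hd
        _ = (K : ℝ) * ‖x (t - h) - x t + h • v‖ := by
            rw [dist_eq_norm]
            congr 1
            rw [smul_neg]
            abel_nf
    have hKr : Tendsto (fun h : ℝ => (K : ℝ) * (‖x (t - h) - x t + h • v‖ / h))
        (nhdsWithin 0 (Ioi 0)) (nhds 0) := by
      simpa using hr.const_mul (K : ℝ)
    exact squeeze_zero_norm' hbound hKr
  -- main forward limit
  have key : Tendsto (fun h : ℝ => (B (x (t - h)) - B (x t)) / h)
      (nhdsWithin 0 (Ioi 0)) (nhds (B' (-v))) := by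
    have hsum := (hB' (-v)).add hcorr
    rw [add_zero] at hsum
    refine hsum.congr ?_
    intro h
    rw [← add_div]
    ring_nf
  -- conclude via substitution a = t - h
  have hmap : Tendsto (fun a : ℝ => t - a) (nhdsWithin t (Iio t))
      (nhdsWithin 0 (Ioi 0)) := by
    apply tendsto_nhdsWithin_of_tendsto_nhds_of_eventually_within
    · have : Tendsto (fun a : ℝ => t - a) (nhds t) (nhds 0) := by
        simpa using (tendsto_const_nhds (x := t) (f := nhds t)).sub tendsto_id
      exact this.mono_left nhdsWithin_le_nhds
    · filter_upwards [self_mem_nhdsWithin] with a ha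
      exact sub_pos.mpr (mem_Iio.mp ha)
  refine (key.neg.comp hmap).congr ?_
  intro a
  simp only [Function.comp_apply, sub_sub_cancel]
  rw [← neg_div, neg_sub]
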